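/- For any two lattices L and M of V, m₊(L,M) = m₊(L+M, L∩M) and m₋(L,M) = m₋(L+M, L∩M). -/

import Mathlib

open scoped Pointwise

variable {R K V : Type*} [CommRing R] [IsDomain R] [IsDiscreteValuationRing R]
  [Field K] [Algebra R K] [IsFractionRing R K]
  [AddCommGroup V] [Module K V] [Module R V] [IsScalarTower R K V]
  [FiniteDimensional K V]

/-- A lattice in `V` is a finitely generated `R`-submodule spanning `V` over `K`. -/
def IsLattice (K : Type*) [Field K] [Algebra R K] [Module K V] (L : Submodule R V) : Prop :=
  L.FG ∧ Submodule.span K (L : Set V) = ⊤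

/-- `πⁿ L`, for `n ∈ ℤ` (via the embedding of `π` in `K`). -/
noncomputable def latTwist (π : R) (n : ℤ) (L : Submodule R V) : Submodule R V :=
  ((algebraMap R K π) ^ n) • L

/-- The lower middle `m₋(L,M) = ∑ₙ (πⁿL ∩ π⁻ⁿM)`. -/
noncomputable def lowerMiddle (π : R) (L M : Submodule R V) : Submodule R V :=
  ⨆ n : ℤ, (latTwist (K := K) π n L ⊓ latTwist (K := K) π (-n) M)

/-- The upper middle `m₊(L,M) = ⋂ₙ (πⁿL + π⁻ⁿM)`. -/
noncomputable def upperMiddle (π : R) (L M : Submodule R V) : Submodule R V :=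
  ⨅ n : ℤ, (latTwist (K := K) π n L ⊔ latTwist (K := K) π (-n) M)

section Aux

variable {π : R}

lemma algebraMap_pi_ne_zero (hπ : π ≠ 0) : (algebraMap R K π) ≠ 0 :=
  (map_ne_zero_iff _ (IsFractionRing.injective R K)).mpr hπ

lemma mem_latTwist (hπ : π ≠ 0) (n : ℤ) (L : Submodule R V) (x : V) :
    x ∈ latTwist (K := K) π n L ↔ ((algebraMap R K π) ^ (-n)) • x ∈ L := by
  rw [latTwist, ← SetLike.mem_coe, Submodule.coe_pointwise_smul,
    Set.mem_smul_set_iff_inv_smul_mem₀ (zpow_ne_zero _ (algebraMap_pi_ne_zero hπ)),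
    ← zpow_neg, SetLike.mem_coe]

lemma zpow_smul_mem (hπ : π ≠ 0) {k : ℤ} (hk : 0 ≤ k) {L : Submodule R V} {y : V}
    (hy : y ∈ L) : ((algebraMap R K π) ^ k) • y ∈ L := by
  lift k to ℕ using hk
  rw [zpow_natCast, ← map_pow, algebraMap_smul]
  exact L.smul_mem _ hy

lemma latTwist_antitone (hπ : π ≠ 0) {m n : ℤ} (h : m ≤ n) (L : Submodule R V) :
    latTwist (K := K) π n L ≤ latTwist (K := K) π m L := by
  intro x hx
  rw [mem_latTwist hπ] at hx ⊢
  have := zpow_smul_mem (K := K) hπ (sub_nonneg.mpr h) hx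
  rwa [smul_smul, ← zpow_add₀ (algebraMap_pi_ne_zero hπ),
    show n - m + -n = -m by ring] at this

lemma latTwist_inf (hπ : π ≠ 0) (n : ℤ) (L M : Submodule R V) :
    latTwist (K := K) π n (L ⊓ M) = latTwist (K := K) π n L ⊓ latTwist (K := K) π n M := by
  ext x
  simp [mem_latTwist hπ, Submodule.mem_inf]

lemma latTwist_sup (hπ : π ≠ 0) (n : ℤ) (L M : Submodule R V) :
    latTwist (K := K) π n (L ⊔ M) = latTwist (K := K) π n L ⊔ latTwist (K := K) π n M :=
  Submodule.smul_sup' _ _ _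

/-- The key inclusion for the upper middle: for `n ≥ 0`,
`(πⁿL + π⁻ⁿM) ∩ (π⁻ⁿL + πⁿM) ≤ πⁿ(L+M) + π⁻ⁿ(L∩M)`. -/
lemma upper_key (hπ : π ≠ 0) {n : ℤ} (hn : 0 ≤ n) (L M : Submodule R V) :
    (latTwist (K := K) π n L ⊔ latTwist (K := K) π (-n) M) ⊓
      (latTwist (K := K) π (-n) L ⊔ latTwist (K := K) π n M) ≤
    latTwist (K := K) π n (L ⊔ M) ⊔ latTwist (K := K) π (-n) (L ⊓ M) := by
  have hmono : ∀ N : Submodule R V, latTwist (K := K) π n N ≤ latTwist (K := K) π (-n) N :=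
    fun N => latTwist_antitone hπ (by omega) N
  intro v hv
  rw [Submodule.mem_inf] at hv
  obtain ⟨hv₁, hv₂⟩ := hv
  rw [Submodule.mem_sup] at hv₁ hv₂
  obtain ⟨a, ha, b, hb, rfl⟩ := hv₁
  obtain ⟨a', ha', b', hb', h⟩ := hv₂
  rw [Submodule.mem_sup]
  refine ⟨a + b', ?_, b - b', ?_, by abel⟩
  · rw [latTwist_sup hπ, Submodule.mem_sup]
    exact ⟨a, ha, b', hb', rfl⟩
  · rw [latTwist_inf hπ]
    refine ⟨?_, ?_⟩
    · have hba : b - b' = a' - a :=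
        sub_eq_sub_iff_add_eq_add.mpr (by rw [add_comm b a]; exact h.symm)
      rw [hba]
      exact (latTwist (K := K) π (-n) L).sub_mem ha' (hmono L ha)
    · exact (latTwist (K := K) π (-n) M).sub_mem hb (hmono M hb')

/-- The key inclusion for the lower middle: for `n ≥ 0`,
`πⁿ(L+M) ∩ π⁻ⁿ(L∩M) ≤ (πⁿL ∩ π⁻ⁿM) + (π⁻ⁿL ∩ πⁿM)`. -/
lemma lower_key (hπ : π ≠ 0) {n : ℤ} (hn : 0 ≤ n) (L M : Submodule R V) :
    latTwist (K := K) π n (L ⊔ M) ⊓ latTwist (K := K) π (-n) (L ⊓ M) ≤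
    (latTwist (K := K) π n L ⊓ latTwist (K := K) π (-n) M) ⊔
      (latTwist (K := K) π (-n) L ⊓ latTwist (K := K) π n M) := by
  have hmono : ∀ N : Submodule R V, latTwist (K := K) π n N ≤ latTwist (K := K) π (-n) N :=
    fun N => latTwist_antitone hπ (by omega) N
  intro v hv
  rw [Submodule.mem_inf] at hv
  obtain ⟨hv₁, hv₂⟩ := hv
  rw [latTwist_sup hπ, Submodule.mem_sup] at hv₁
  rw [latTwist_inf hπ, Submodule.mem_inf] at hv₂
  obtain ⟨a, ha, b, hb, rfl⟩ := hv₁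
  rw [Submodule.mem_sup]
  refine ⟨a, ⟨ha, ?_⟩, b, ⟨?_, hb⟩, rfl⟩
  · have : a = (a + b) - b := by abel
    rw [this]
    exact (latTwist (K := K) π (-n) M).sub_mem hv₂.2 (hmono M hb)
  · have : b = (a + b) - a := by abel
    rw [this]
    exact (latTwist (K := K) π (-n) L).sub_mem hv₂.1 (hmono L ha)

lemma latTwist_mono (hπ : π ≠ 0) (n : ℤ) {L M : Submodule R V} (h : L ≤ M) :
    latTwist (K := K) π n L ≤ latTwist (K := K) π n M := by
  intro x hx
  rw [mem_latTwist hπ] at hx ⊢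
  exact h hx

end Aux

/-- `m₊(L,M) = m₊(L+M, L∩M)` and `m₋(L,M) = m₋(L+M, L∩M)`. -/
theorem middle_of_sup_inf (π : R) (hπ : Irreducible π)
    (L M : Submodule R V) (hL : IsLattice K L) (hM : IsLattice K M) :
    upperMiddle (K := K) π L M = upperMiddle (K := K) π (L ⊔ M) (L ⊓ M) ∧
    lowerMiddle (K := K) π L M = lowerMiddle (K := K) π (L ⊔ M) (L ⊓ M) := by
  have hπ0 : π ≠ 0 := hπ.ne_zero
  have mono : ∀ (n : ℤ) {A B : Submodule R V}, A ≤ B →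
      latTwist (K := K) π n A ≤ latTwist (K := K) π n B :=
    fun n _ _ h => latTwist_mono hπ0 n h
  have anti : ∀ {m n : ℤ}, m ≤ n → ∀ N : Submodule R V,
      latTwist (K := K) π n N ≤ latTwist (K := K) π m N :=
    fun h N => latTwist_antitone hπ0 h N
  constructor
  · apply le_antisymm
    · refine le_iInf fun n => ?_
      rcases le_or_gt 0 n with hn | hn
      · refine le_trans (le_inf (iInf_le _ n) (iInf_le _ (-n))) ?_
        simpa [neg_neg] using upper_key (K := K) hπ0 hn L M
      · refine le_trans (iInf_le _ (-n)) ?_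
        simp only [neg_neg]
        refine le_trans ?_ le_sup_left
        refine sup_le ?_ (mono n le_sup_right)
        exact (anti (by omega : n ≤ -n) L).trans (mono n le_sup_left)
    · refine le_iInf fun n => ?_
      rcases le_or_gt 0 n with hn | hn
      · refine le_trans (iInf_le _ n) ?_
        rw [latTwist_sup hπ0]
        refine sup_le (sup_le le_sup_left ?_) ?_
        · exact (anti (by omega : -n ≤ n) M).trans le_sup_right
        · exact (mono (-n) inf_le_right).trans le_sup_right
      · refine le_trans (iInf_le _ (-n)) ?_
        simp only [neg_neg]
        refine sup_le ?_ ((mono n inf_le_left).trans le_sup_left)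
        rw [latTwist_sup hπ0]
        exact sup_le ((anti (by omega : n ≤ -n) L).trans le_sup_left) le_sup_right
  · apply le_antisymm
    · refine iSup_le fun n => ?_
      rcases le_or_gt 0 n with hn | hn
      · refine le_trans ?_ (le_iSup _ n)
        refine le_inf (inf_le_left.trans (mono n le_sup_left)) ?_
        rw [latTwist_inf hπ0]
        exact le_inf (inf_le_left.trans (anti (by omega : -n ≤ n) L)) inf_le_right
      · refine le_trans ?_ (le_iSup _ (-n))
        simp only [neg_neg]
        refine le_inf (inf_le_right.trans (mono (-n) le_sup_right)) ?_
        rw [latTwist_inf hπ0]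
        exact le_inf inf_le_left (inf_le_right.trans (anti (by omega : n ≤ -n) M))
    · refine iSup_le fun n => ?_
      rcases le_or_gt 0 n with hn | hn
      · have h1 := le_iSup (fun m : ℤ =>
          latTwist (K := K) π m L ⊓ latTwist (K := K) π (-m) M) n
        have h2 := le_iSup (fun m : ℤ =>
          latTwist (K := K) π m L ⊓ latTwist (K := K) π (-m) M) (-n)
        simp only [neg_neg] at h1 h2
        exact (lower_key (K := K) hπ0 hn L M).trans (sup_le h1 h2)
      · have h2 := le_iSup (fun m : ℤ =>
          latTwist (K := K) π m L ⊓ latTwist (K := K) π (-m) M) (-n)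
        simp only [neg_neg] at h2
        refine le_trans ?_ h2
        refine le_inf (inf_le_right.trans (mono (-n) inf_le_left)) ?_
        exact inf_le_right.trans ((mono (-n) inf_le_right).trans (anti (by omega : n ≤ -n) M))
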